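/- Let L be a Lie algebra and r ∈ Im(1−τ) ⊆ L⊗L. Then Δ_r (defined by Δ_r(x)=x·r) endows L with a Lie bialgebra structure if and only if r satisfies the modified Yang–Baxter equation x·c(r) = 0 for all x ∈ L. -/

import Mathlib

open TensorProduct

/-- The cyclic permutation `ξ : L⊗L⊗L → L⊗L⊗L`, `x₁⊗x₂⊗x₃ ↦ x₂⊗x₃⊗x₁`. -/
noncomputable def cyclicPerm (F L : Type*) [Field F] [AddCommGroup L] [Module F L] :
    L ⊗[F] (L ⊗[F] L) →ₗ[F] L ⊗[F] (L ⊗[F] L) :=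
  (TensorProduct.assoc F L L L).toLinearMap ∘ₗ
    (TensorProduct.comm F L (L ⊗[F] L)).toLinearMap

/-- The coboundary map `Δ_r : L → L ⊗ L`, `x ↦ x · r`. -/
noncomputable def coboundaryDelta (F : Type*) {L : Type*} [Field F]
    [LieRing L] [LieAlgebra F L] (r : L ⊗[F] L) : L →ₗ[F] L ⊗[F] L :=
  (LieModule.toEnd F L (L ⊗[F] L)).flip r

/-- `c(r) = [r¹²,r¹³] + [r¹²,r²³] + [r¹³,r²³]` for `r = Σᵢ pᵢ ⊗ qᵢ`. -/
noncomputable def cYB {F L : Type*} [Field F] [LieRing L] [LieAlgebra F L]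
    {ι : Type*} [Fintype ι] (p q : ι → L) : L ⊗[F] (L ⊗[F] L) :=
  ∑ i, ∑ j, (⁅p i, p j⁆ ⊗ₜ[F] (q i ⊗ₜ[F] q j)
    + p i ⊗ₜ[F] (⁅q i, p j⁆ ⊗ₜ[F] q j)
    + p i ⊗ₜ[F] (p j ⊗ₜ[F] ⁅q i, q j⁆))

namespace WittAux

set_option linter.unusedSectionVars false
set_option maxHeartbeats 1000000

variable {F L : Type*} [Field F] [LieRing L] [LieAlgebra F L]
variable {ι : Type*} [Fintype ι]

lemma lie_sum' {M : Type*} [AddCommGroup M] [LieRingModule L M]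
    (x : L) (s : Finset ι) (f : ι → M) : ⁅x, ∑ i ∈ s, f i⁆ = ∑ i ∈ s, ⁅x, f i⁆ := by
  induction s using Finset.cons_induction with
  | empty => simp
  | cons i s hi ih => simp [Finset.sum_cons, lie_add, ih]

lemma skewB (a b : ι → L)
    (hsk : (∑ i, b i ⊗ₜ[F] a i : L ⊗[F] L) = - ∑ i, a i ⊗ₜ[F] b i)
    {M : Type*} [AddCommGroup M] [Module F M] (φ : L →ₗ[F] L →ₗ[F] M) :
    ∑ i, φ (b i) (a i) = - ∑ i, φ (a i) (b i) := by
  simpa [map_sum, map_neg, TensorProduct.lift.tmul]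
    using congrArg (TensorProduct.lift φ) hsk

section Moves
variable (a b : ι → L) (x : L)

lemma m3 (hsk : (∑ i, b i ⊗ₜ[F] a i : L ⊗[F] L) = - ∑ i, a i ⊗ₜ[F] b i) :
    (∑ i, ∑ j, ⁅b i, a j⁆ ⊗ₜ[F] (b j ⊗ₜ[F] ⁅x, a i⁆) : L ⊗[F] (L ⊗[F] L))
      = ∑ i, ∑ j, ⁅a i, a j⁆ ⊗ₜ[F] (b i ⊗ₜ[F] ⁅x, b j⁆) := by
  have step : ∀ jj : ι, (∑ i, ⁅b i, a jj⁆ ⊗ₜ[F] (b jj ⊗ₜ[F] ⁅x, a i⁆) : L ⊗[F] (L ⊗[F] L))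
      = -∑ i, ⁅a i, a jj⁆ ⊗ₜ[F] (b jj ⊗ₜ[F] ⁅x, b i⁆) := fun jj =>
    skewB a b hsk (LinearMap.mk₂ F (fun u v => ⁅u, a jj⁆ ⊗ₜ[F] (b jj ⊗ₜ[F] ⁅x, v⁆)) (by intros; simp [add_tmul, tmul_add, add_lie, lie_add, smul_tmul, tmul_smul, smul_lie, lie_smul]) (by intros; simp [add_tmul, tmul_add, add_lie, lie_add, smul_tmul, tmul_smul, smul_lie, lie_smul]) (by intros; simp [add_tmul, tmul_add, add_lie, lie_add, smul_tmul, tmul_smul, smul_lie, lie_smul]) (by intros; simp [add_tmul, tmul_add, add_lie, lie_add, smul_tmul, tmul_smul, smul_lie, lie_smul]))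
  calc (∑ i, ∑ j, ⁅b i, a j⁆ ⊗ₜ[F] (b j ⊗ₜ[F] ⁅x, a i⁆) : L ⊗[F] (L ⊗[F] L))
      = ∑ j, ∑ i, ⁅b i, a j⁆ ⊗ₜ[F] (b j ⊗ₜ[F] ⁅x, a i⁆) := Finset.sum_comm
    _ = ∑ j, -∑ i, ⁅a i, a j⁆ ⊗ₜ[F] (b j ⊗ₜ[F] ⁅x, b i⁆) :=
        Finset.sum_congr rfl fun j _ => step j
    _ = ∑ j, ∑ i, -(⁅a i, a j⁆ ⊗ₜ[F] (b j ⊗ₜ[F] ⁅x, b i⁆)) := by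
        simp only [Finset.sum_neg_distrib]
    _ = ∑ i, ∑ j, -(⁅a j, a i⁆ ⊗ₜ[F] (b i ⊗ₜ[F] ⁅x, b j⁆)) := rfl
    _ = ∑ i, ∑ j, ⁅a i, a j⁆ ⊗ₜ[F] (b i ⊗ₜ[F] ⁅x, b j⁆) :=
        Finset.sum_congr rfl fun i _ => Finset.sum_congr rfl fun j _ => by
          rw [← neg_tmul, lie_skew]

lemma m4 (hsk : (∑ i, b i ⊗ₜ[F] a i : L ⊗[F] L) = - ∑ i, a i ⊗ₜ[F] b i) :
    (∑ i, ∑ j, b j ⊗ₜ[F] (⁅x, a i⁆ ⊗ₜ[F] ⁅b i, a j⁆) : L ⊗[F] (L ⊗[F] L))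
      = ∑ i, ∑ j, a i ⊗ₜ[F] (⁅x, a j⁆ ⊗ₜ[F] ⁅b i, b j⁆) := by
  have step : ∀ ii : ι, (∑ j, b j ⊗ₜ[F] (⁅x, a ii⁆ ⊗ₜ[F] ⁅b ii, a j⁆) : L ⊗[F] (L ⊗[F] L))
      = -∑ j, a j ⊗ₜ[F] (⁅x, a ii⁆ ⊗ₜ[F] ⁅b ii, b j⁆) := fun ii =>
    skewB a b hsk (LinearMap.mk₂ F (fun u v => u ⊗ₜ[F] (⁅x, a ii⁆ ⊗ₜ[F] ⁅b ii, v⁆)) (by intros; simp [add_tmul, tmul_add, add_lie, lie_add, smul_tmul, tmul_smul, smul_lie, lie_smul]) (by intros; simp [add_tmul, tmul_add, add_lie, lie_add, smul_tmul, tmul_smul, smul_lie, lie_smul]) (by intros; simp [add_tmul, tmul_add, add_lie, lie_add, smul_tmul, tmul_smul, smul_lie, lie_smul]) (by intros; simp [add_tmul, tmul_add, add_lie, lie_add, smul_tmul, tmul_smul, smul_lie, lie_smul]))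
  calc (∑ i, ∑ j, b j ⊗ₜ[F] (⁅x, a i⁆ ⊗ₜ[F] ⁅b i, a j⁆) : L ⊗[F] (L ⊗[F] L))
      = ∑ i, -∑ j, a j ⊗ₜ[F] (⁅x, a i⁆ ⊗ₜ[F] ⁅b i, b j⁆) :=
        Finset.sum_congr rfl fun i _ => step i
    _ = ∑ i, ∑ j, -(a j ⊗ₜ[F] (⁅x, a i⁆ ⊗ₜ[F] ⁅b i, b j⁆)) := by
        simp only [Finset.sum_neg_distrib]
    _ = ∑ i, ∑ j, -(a i ⊗ₜ[F] (⁅x, a j⁆ ⊗ₜ[F] ⁅b j, b i⁆)) := Finset.sum_comm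
    _ = ∑ i, ∑ j, a i ⊗ₜ[F] (⁅x, a j⁆ ⊗ₜ[F] ⁅b i, b j⁆) :=
        Finset.sum_congr rfl fun i _ => Finset.sum_congr rfl fun j _ => by
          rw [← tmul_neg, ← tmul_neg, lie_skew]

lemma m5 (hsk : (∑ i, b i ⊗ₜ[F] a i : L ⊗[F] L) = - ∑ i, a i ⊗ₜ[F] b i) :
    (∑ i, ∑ j, a j ⊗ₜ[F] (⁅b i, b j⁆ ⊗ₜ[F] ⁅x, a i⁆) : L ⊗[F] (L ⊗[F] L))
      = ∑ i, ∑ j, a i ⊗ₜ[F] (⁅b i, a j⁆ ⊗ₜ[F] ⁅x, b j⁆) := by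
  have step : ∀ jj : ι, (∑ i, a jj ⊗ₜ[F] (⁅b i, b jj⁆ ⊗ₜ[F] ⁅x, a i⁆) : L ⊗[F] (L ⊗[F] L))
      = -∑ i, a jj ⊗ₜ[F] (⁅a i, b jj⁆ ⊗ₜ[F] ⁅x, b i⁆) := fun jj =>
    skewB a b hsk (LinearMap.mk₂ F (fun u v => a jj ⊗ₜ[F] (⁅u, b jj⁆ ⊗ₜ[F] ⁅x, v⁆)) (by intros; simp [add_tmul, tmul_add, add_lie, lie_add, smul_tmul, tmul_smul, smul_lie, lie_smul]) (by intros; simp [add_tmul, tmul_add, add_lie, lie_add, smul_tmul, tmul_smul, smul_lie, lie_smul]) (by intros; simp [add_tmul, tmul_add, add_lie, lie_add, smul_tmul, tmul_smul, smul_lie, lie_smul]) (by intros; simp [add_tmul, tmul_add, add_lie, lie_add, smul_tmul, tmul_smul, smul_lie, lie_smul]))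
  calc (∑ i, ∑ j, a j ⊗ₜ[F] (⁅b i, b j⁆ ⊗ₜ[F] ⁅x, a i⁆) : L ⊗[F] (L ⊗[F] L))
      = ∑ j, ∑ i, a j ⊗ₜ[F] (⁅b i, b j⁆ ⊗ₜ[F] ⁅x, a i⁆) := Finset.sum_comm
    _ = ∑ j, -∑ i, a j ⊗ₜ[F] (⁅a i, b j⁆ ⊗ₜ[F] ⁅x, b i⁆) :=
        Finset.sum_congr rfl fun j _ => step j
    _ = ∑ j, ∑ i, -(a j ⊗ₜ[F] (⁅a i, b j⁆ ⊗ₜ[F] ⁅x, b i⁆)) := by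
        simp only [Finset.sum_neg_distrib]
    _ = ∑ i, ∑ j, -(a i ⊗ₜ[F] (⁅a j, b i⁆ ⊗ₜ[F] ⁅x, b j⁆)) := rfl
    _ = ∑ i, ∑ j, a i ⊗ₜ[F] (⁅b i, a j⁆ ⊗ₜ[F] ⁅x, b j⁆) :=
        Finset.sum_congr rfl fun i _ => Finset.sum_congr rfl fun j _ => by
          rw [← tmul_neg, ← neg_tmul, lie_skew]

lemma m6 (hsk : (∑ i, b i ⊗ₜ[F] a i : L ⊗[F] L) = - ∑ i, a i ⊗ₜ[F] b i) :
    (∑ i, ∑ j, ⁅b i, b j⁆ ⊗ₜ[F] (⁅x, a i⁆ ⊗ₜ[F] a j) : L ⊗[F] (L ⊗[F] L))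
      = ∑ i, ∑ j, ⁅a i, a j⁆ ⊗ₜ[F] (⁅x, b i⁆ ⊗ₜ[F] b j) := by
  have step1 : ∀ ii : ι, (∑ j, ⁅b ii, b j⁆ ⊗ₜ[F] (⁅x, a ii⁆ ⊗ₜ[F] a j) : L ⊗[F] (L ⊗[F] L))
      = -∑ j, ⁅b ii, a j⁆ ⊗ₜ[F] (⁅x, a ii⁆ ⊗ₜ[F] b j) := fun ii =>
    skewB a b hsk (LinearMap.mk₂ F (fun u v => ⁅b ii, u⁆ ⊗ₜ[F] (⁅x, a ii⁆ ⊗ₜ[F] v)) (by intros; simp [add_tmul, tmul_add, add_lie, lie_add, smul_tmul, tmul_smul, smul_lie, lie_smul]) (by intros; simp [add_tmul, tmul_add, add_lie, lie_add, smul_tmul, tmul_smul, smul_lie, lie_smul]) (by intros; simp [add_tmul, tmul_add, add_lie, lie_add, smul_tmul, tmul_smul, smul_lie, lie_smul]) (by intros; simp [add_tmul, tmul_add, add_lie, lie_add, smul_tmul, tmul_smul, smul_lie, lie_smul]))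
  have step2 : ∀ jj : ι, (∑ i, ⁅b i, a jj⁆ ⊗ₜ[F] (⁅x, a i⁆ ⊗ₜ[F] b jj) : L ⊗[F] (L ⊗[F] L))
      = -∑ i, ⁅a i, a jj⁆ ⊗ₜ[F] (⁅x, b i⁆ ⊗ₜ[F] b jj) := fun jj =>
    skewB a b hsk (LinearMap.mk₂ F (fun u v => ⁅u, a jj⁆ ⊗ₜ[F] (⁅x, v⁆ ⊗ₜ[F] b jj)) (by intros; simp [add_tmul, tmul_add, add_lie, lie_add, smul_tmul, tmul_smul, smul_lie, lie_smul]) (by intros; simp [add_tmul, tmul_add, add_lie, lie_add, smul_tmul, tmul_smul, smul_lie, lie_smul]) (by intros; simp [add_tmul, tmul_add, add_lie, lie_add, smul_tmul, tmul_smul, smul_lie, lie_smul]) (by intros; simp [add_tmul, tmul_add, add_lie, lie_add, smul_tmul, tmul_smul, smul_lie, lie_smul]))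
  calc (∑ i, ∑ j, ⁅b i, b j⁆ ⊗ₜ[F] (⁅x, a i⁆ ⊗ₜ[F] a j) : L ⊗[F] (L ⊗[F] L))
      = ∑ i, -∑ j, ⁅b i, a j⁆ ⊗ₜ[F] (⁅x, a i⁆ ⊗ₜ[F] b j) :=
        Finset.sum_congr rfl fun i _ => step1 i
    _ = ∑ i, ∑ j, -(⁅b i, a j⁆ ⊗ₜ[F] (⁅x, a i⁆ ⊗ₜ[F] b j)) := by
        simp only [Finset.sum_neg_distrib]
    _ = ∑ j, ∑ i, -(⁅b i, a j⁆ ⊗ₜ[F] (⁅x, a i⁆ ⊗ₜ[F] b j)) := Finset.sum_comm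
    _ = ∑ j, -∑ i, ⁅b i, a j⁆ ⊗ₜ[F] (⁅x, a i⁆ ⊗ₜ[F] b j) := by
        simp only [Finset.sum_neg_distrib]
    _ = ∑ j, - -∑ i, ⁅a i, a j⁆ ⊗ₜ[F] (⁅x, b i⁆ ⊗ₜ[F] b j) :=
        Finset.sum_congr rfl fun j _ => by rw [step2 j]
    _ = ∑ j, ∑ i, ⁅a i, a j⁆ ⊗ₜ[F] (⁅x, b i⁆ ⊗ₜ[F] b j) := by
        simp only [neg_neg]
    _ = ∑ i, ∑ j, ⁅a i, a j⁆ ⊗ₜ[F] (⁅x, b i⁆ ⊗ₜ[F] b j) := Finset.sum_comm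

lemma m7 :
    (∑ i, ∑ j, a i ⊗ₜ[F] (⁅⁅x, b i⁆, a j⁆ ⊗ₜ[F] b j) : L ⊗[F] (L ⊗[F] L))
      = ∑ i, ∑ j, a i ⊗ₜ[F] (⁅x, ⁅b i, a j⁆⁆ ⊗ₜ[F] b j)
        - ∑ i, ∑ j, a i ⊗ₜ[F] (⁅b i, ⁅x, a j⁆⁆ ⊗ₜ[F] b j) := by
  simp only [lie_lie, sub_tmul, tmul_sub, Finset.sum_sub_distrib]

lemma m8 :
    (∑ i, ∑ j, a i ⊗ₜ[F] (a j ⊗ₜ[F] ⁅⁅x, b i⁆, b j⁆) : L ⊗[F] (L ⊗[F] L))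
      = ∑ i, ∑ j, a i ⊗ₜ[F] (a j ⊗ₜ[F] ⁅x, ⁅b i, b j⁆⁆)
        - ∑ i, ∑ j, a i ⊗ₜ[F] (a j ⊗ₜ[F] ⁅b i, ⁅x, b j⁆⁆) := by
  simp only [lie_lie, sub_tmul, tmul_sub, Finset.sum_sub_distrib]

lemma m9 (hsk : (∑ i, b i ⊗ₜ[F] a i : L ⊗[F] L) = - ∑ i, a i ⊗ₜ[F] b i) :
    (∑ i, ∑ j, ⁅⁅x, b i⁆, b j⁆ ⊗ₜ[F] (a i ⊗ₜ[F] a j) : L ⊗[F] (L ⊗[F] L))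
      = ∑ i, ∑ j, ⁅x, ⁅a i, a j⁆⁆ ⊗ₜ[F] (b i ⊗ₜ[F] b j)
        - ∑ i, ∑ j, ⁅b i, ⁅x, b j⁆⁆ ⊗ₜ[F] (a i ⊗ₜ[F] a j) := by
  have hJ : (∑ i, ∑ j, ⁅⁅x, b i⁆, b j⁆ ⊗ₜ[F] (a i ⊗ₜ[F] a j) : L ⊗[F] (L ⊗[F] L))
      = ∑ i, ∑ j, ⁅x, ⁅b i, b j⁆⁆ ⊗ₜ[F] (a i ⊗ₜ[F] a j)
        - ∑ i, ∑ j, ⁅b i, ⁅x, b j⁆⁆ ⊗ₜ[F] (a i ⊗ₜ[F] a j) := by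
    simp only [lie_lie, sub_tmul, tmul_sub, Finset.sum_sub_distrib]
  rw [hJ]
  congr 1
  have step1 : ∀ jj : ι, (∑ i, ⁅x, ⁅b i, b jj⁆⁆ ⊗ₜ[F] (a i ⊗ₜ[F] a jj) : L ⊗[F] (L ⊗[F] L))
      = -∑ i, ⁅x, ⁅a i, b jj⁆⁆ ⊗ₜ[F] (b i ⊗ₜ[F] a jj) := fun jj =>
    skewB a b hsk (LinearMap.mk₂ F (fun u v => ⁅x, ⁅u, b jj⁆⁆ ⊗ₜ[F] (v ⊗ₜ[F] a jj)) (by intros; simp [add_tmul, tmul_add, add_lie, lie_add, smul_tmul, tmul_smul, smul_lie, lie_smul]) (by intros; simp [add_tmul, tmul_add, add_lie, lie_add, smul_tmul, tmul_smul, smul_lie, lie_smul]) (by intros; simp [add_tmul, tmul_add, add_lie, lie_add, smul_tmul, tmul_smul, smul_lie, lie_smul]) (by intros; simp [add_tmul, tmul_add, add_lie, lie_add, smul_tmul, tmul_smul, smul_lie, lie_smul]))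
  have step2 : ∀ ii : ι, (∑ j, ⁅x, ⁅a ii, b j⁆⁆ ⊗ₜ[F] (b ii ⊗ₜ[F] a j) : L ⊗[F] (L ⊗[F] L))
      = -∑ j, ⁅x, ⁅a ii, a j⁆⁆ ⊗ₜ[F] (b ii ⊗ₜ[F] b j) := fun ii =>
    skewB a b hsk (LinearMap.mk₂ F (fun u v => ⁅x, ⁅a ii, u⁆⁆ ⊗ₜ[F] (b ii ⊗ₜ[F] v)) (by intros; simp [add_tmul, tmul_add, add_lie, lie_add, smul_tmul, tmul_smul, smul_lie, lie_smul]) (by intros; simp [add_tmul, tmul_add, add_lie, lie_add, smul_tmul, tmul_smul, smul_lie, lie_smul]) (by intros; simp [add_tmul, tmul_add, add_lie, lie_add, smul_tmul, tmul_smul, smul_lie, lie_smul]) (by intros; simp [add_tmul, tmul_add, add_lie, lie_add, smul_tmul, tmul_smul, smul_lie, lie_smul]))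
  calc (∑ i, ∑ j, ⁅x, ⁅b i, b j⁆⁆ ⊗ₜ[F] (a i ⊗ₜ[F] a j) : L ⊗[F] (L ⊗[F] L))
      = ∑ j, ∑ i, ⁅x, ⁅b i, b j⁆⁆ ⊗ₜ[F] (a i ⊗ₜ[F] a j) := Finset.sum_comm
    _ = ∑ j, -∑ i, ⁅x, ⁅a i, b j⁆⁆ ⊗ₜ[F] (b i ⊗ₜ[F] a j) :=
        Finset.sum_congr rfl fun j _ => step1 j
    _ = ∑ j, ∑ i, -(⁅x, ⁅a i, b j⁆⁆ ⊗ₜ[F] (b i ⊗ₜ[F] a j)) := by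
        simp only [Finset.sum_neg_distrib]
    _ = ∑ i, ∑ j, -(⁅x, ⁅a i, b j⁆⁆ ⊗ₜ[F] (b i ⊗ₜ[F] a j)) := Finset.sum_comm
    _ = ∑ i, -∑ j, ⁅x, ⁅a i, b j⁆⁆ ⊗ₜ[F] (b i ⊗ₜ[F] a j) := by
        simp only [Finset.sum_neg_distrib]
    _ = ∑ i, - -∑ j, ⁅x, ⁅a i, a j⁆⁆ ⊗ₜ[F] (b i ⊗ₜ[F] b j) :=
        Finset.sum_congr rfl fun i _ => by rw [step2 i]
    _ = ∑ i, ∑ j, ⁅x, ⁅a i, a j⁆⁆ ⊗ₜ[F] (b i ⊗ₜ[F] b j) := by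
        simp only [neg_neg]

lemma m10 (hsk : (∑ i, b i ⊗ₜ[F] a i : L ⊗[F] L) = - ∑ i, a i ⊗ₜ[F] b i) :
    (∑ i, ∑ j, b j ⊗ₜ[F] (a i ⊗ₜ[F] ⁅⁅x, b i⁆, a j⁆) : L ⊗[F] (L ⊗[F] L))
      = ∑ i, ∑ j, a i ⊗ₜ[F] (a j ⊗ₜ[F] ⁅b i, ⁅x, b j⁆⁆) := by
  have step : ∀ ii : ι, (∑ j, b j ⊗ₜ[F] (a ii ⊗ₜ[F] ⁅⁅x, b ii⁆, a j⁆) : L ⊗[F] (L ⊗[F] L))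
      = -∑ j, a j ⊗ₜ[F] (a ii ⊗ₜ[F] ⁅⁅x, b ii⁆, b j⁆) := fun ii =>
    skewB a b hsk (LinearMap.mk₂ F (fun u v => u ⊗ₜ[F] (a ii ⊗ₜ[F] ⁅⁅x, b ii⁆, v⁆)) (by intros; simp [add_tmul, tmul_add, add_lie, lie_add, smul_tmul, tmul_smul, smul_lie, lie_smul]) (by intros; simp [add_tmul, tmul_add, add_lie, lie_add, smul_tmul, tmul_smul, smul_lie, lie_smul]) (by intros; simp [add_tmul, tmul_add, add_lie, lie_add, smul_tmul, tmul_smul, smul_lie, lie_smul]) (by intros; simp [add_tmul, tmul_add, add_lie, lie_add, smul_tmul, tmul_smul, smul_lie, lie_smul]))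
  calc (∑ i, ∑ j, b j ⊗ₜ[F] (a i ⊗ₜ[F] ⁅⁅x, b i⁆, a j⁆) : L ⊗[F] (L ⊗[F] L))
      = ∑ i, -∑ j, a j ⊗ₜ[F] (a i ⊗ₜ[F] ⁅⁅x, b i⁆, b j⁆) :=
        Finset.sum_congr rfl fun i _ => step i
    _ = ∑ i, ∑ j, -(a j ⊗ₜ[F] (a i ⊗ₜ[F] ⁅⁅x, b i⁆, b j⁆)) := by
        simp only [Finset.sum_neg_distrib]
    _ = ∑ i, ∑ j, -(a i ⊗ₜ[F] (a j ⊗ₜ[F] ⁅⁅x, b j⁆, b i⁆)) := Finset.sum_comm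
    _ = ∑ i, ∑ j, a i ⊗ₜ[F] (a j ⊗ₜ[F] ⁅b i, ⁅x, b j⁆⁆) :=
        Finset.sum_congr rfl fun i _ => Finset.sum_congr rfl fun j _ => by
          rw [← tmul_neg, ← tmul_neg, lie_skew]

lemma m11 (hsk : (∑ i, b i ⊗ₜ[F] a i : L ⊗[F] L) = - ∑ i, a i ⊗ₜ[F] b i) :
    (∑ i, ∑ j, a j ⊗ₜ[F] (⁅⁅x, b i⁆, b j⁆ ⊗ₜ[F] a i) : L ⊗[F] (L ⊗[F] L))
      = ∑ i, ∑ j, a i ⊗ₜ[F] (⁅b i, ⁅x, a j⁆⁆ ⊗ₜ[F] b j) := by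
  have step : ∀ jj : ι, (∑ i, a jj ⊗ₜ[F] (⁅⁅x, b i⁆, b jj⁆ ⊗ₜ[F] a i) : L ⊗[F] (L ⊗[F] L))
      = -∑ i, a jj ⊗ₜ[F] (⁅⁅x, a i⁆, b jj⁆ ⊗ₜ[F] b i) := fun jj =>
    skewB a b hsk (LinearMap.mk₂ F (fun u v => a jj ⊗ₜ[F] (⁅⁅x, u⁆, b jj⁆ ⊗ₜ[F] v)) (by intros; simp [add_tmul, tmul_add, add_lie, lie_add, smul_tmul, tmul_smul, smul_lie, lie_smul]) (by intros; simp [add_tmul, tmul_add, add_lie, lie_add, smul_tmul, tmul_smul, smul_lie, lie_smul]) (by intros; simp [add_tmul, tmul_add, add_lie, lie_add, smul_tmul, tmul_smul, smul_lie, lie_smul]) (by intros; simp [add_tmul, tmul_add, add_lie, lie_add, smul_tmul, tmul_smul, smul_lie, lie_smul]))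
  calc (∑ i, ∑ j, a j ⊗ₜ[F] (⁅⁅x, b i⁆, b j⁆ ⊗ₜ[F] a i) : L ⊗[F] (L ⊗[F] L))
      = ∑ j, ∑ i, a j ⊗ₜ[F] (⁅⁅x, b i⁆, b j⁆ ⊗ₜ[F] a i) := Finset.sum_comm
    _ = ∑ j, -∑ i, a j ⊗ₜ[F] (⁅⁅x, a i⁆, b j⁆ ⊗ₜ[F] b i) :=
        Finset.sum_congr rfl fun j _ => step j
    _ = ∑ j, ∑ i, -(a j ⊗ₜ[F] (⁅⁅x, a i⁆, b j⁆ ⊗ₜ[F] b i)) := by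
        simp only [Finset.sum_neg_distrib]
    _ = ∑ i, ∑ j, -(a i ⊗ₜ[F] (⁅⁅x, a j⁆, b i⁆ ⊗ₜ[F] b j)) := rfl
    _ = ∑ i, ∑ j, a i ⊗ₜ[F] (⁅b i, ⁅x, a j⁆⁆ ⊗ₜ[F] b j) :=
        Finset.sum_congr rfl fun i _ => Finset.sum_congr rfl fun j _ => by
          rw [← tmul_neg, ← neg_tmul, lie_skew]

lemma m12 (hsk : (∑ i, b i ⊗ₜ[F] a i : L ⊗[F] L) = - ∑ i, a i ⊗ₜ[F] b i) :
    (∑ i, ∑ j, ⁅⁅x, b i⁆, a j⁆ ⊗ₜ[F] (b j ⊗ₜ[F] a i) : L ⊗[F] (L ⊗[F] L))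
      = ∑ i, ∑ j, ⁅b i, ⁅x, b j⁆⁆ ⊗ₜ[F] (a i ⊗ₜ[F] a j) := by
  have step : ∀ ii : ι, (∑ j, ⁅⁅x, b ii⁆, a j⁆ ⊗ₜ[F] (b j ⊗ₜ[F] a ii) : L ⊗[F] (L ⊗[F] L))
      = -∑ j, ⁅⁅x, b ii⁆, b j⁆ ⊗ₜ[F] (a j ⊗ₜ[F] a ii) := fun ii =>
    skewB a b hsk (LinearMap.mk₂ F (fun u v => ⁅⁅x, b ii⁆, v⁆ ⊗ₜ[F] (u ⊗ₜ[F] a ii)) (by intros; simp [add_tmul, tmul_add, add_lie, lie_add, smul_tmul, tmul_smul, smul_lie, lie_smul]) (by intros; simp [add_tmul, tmul_add, add_lie, lie_add, smul_tmul, tmul_smul, smul_lie, lie_smul]) (by intros; simp [add_tmul, tmul_add, add_lie, lie_add, smul_tmul, tmul_smul, smul_lie, lie_smul]) (by intros; simp [add_tmul, tmul_add, add_lie, lie_add, smul_tmul, tmul_smul, smul_lie, lie_smul]))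
  calc (∑ i, ∑ j, ⁅⁅x, b i⁆, a j⁆ ⊗ₜ[F] (b j ⊗ₜ[F] a i) : L ⊗[F] (L ⊗[F] L))
      = ∑ i, -∑ j, ⁅⁅x, b i⁆, b j⁆ ⊗ₜ[F] (a j ⊗ₜ[F] a i) :=
        Finset.sum_congr rfl fun i _ => step i
    _ = ∑ i, ∑ j, -(⁅⁅x, b i⁆, b j⁆ ⊗ₜ[F] (a j ⊗ₜ[F] a i)) := by
        simp only [Finset.sum_neg_distrib]
    _ = ∑ i, ∑ j, -(⁅⁅x, b j⁆, b i⁆ ⊗ₜ[F] (a i ⊗ₜ[F] a j)) := Finset.sum_comm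
    _ = ∑ i, ∑ j, ⁅b i, ⁅x, b j⁆⁆ ⊗ₜ[F] (a i ⊗ₜ[F] a j) :=
        Finset.sum_congr rfl fun i _ => Finset.sum_congr rfl fun j _ => by
          rw [← neg_tmul, lie_skew]

end Moves

lemma key (a b : ι → L) (r : L ⊗[F] L) (hrsum : r = ∑ i, a i ⊗ₜ[F] b i)
    (hsk : (∑ i, b i ⊗ₜ[F] a i : L ⊗[F] L) = - ∑ i, a i ⊗ₜ[F] b i) (x : L) :
    ((LinearMap.id : L ⊗[F] (L ⊗[F] L) →ₗ[F] L ⊗[F] (L ⊗[F] L)) + cyclicPerm F L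
      + cyclicPerm F L ∘ₗ cyclicPerm F L)
      (LinearMap.lTensor L (coboundaryDelta F r) (coboundaryDelta F r x))
      = ⁅x, cYB (F := F) a b⁆ := by
  have hΔ : ∀ y : L, coboundaryDelta F r y
      = ∑ j, (⁅y, a j⁆ ⊗ₜ[F] b j + a j ⊗ₜ[F] ⁅y, b j⁆) := by
    intro y
    have h0 : coboundaryDelta F r y = ⁅y, r⁆ := rfl
    rw [h0, hrsum, lie_sum']
    simp [LieModule.lie_tmul_right]
  rw [hΔ x, map_sum, map_sum]
  simp only [map_add, LinearMap.lTensor_tmul, hΔ, tmul_sum, tmul_add,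
    LinearMap.add_apply, LinearMap.comp_apply, LinearMap.id_apply, map_sum, map_add,
    cyclicPerm, LinearEquiv.coe_coe, comm_tmul, assoc_tmul, cYB, lie_sum', lie_add,
    LieModule.lie_tmul_right]
  simp only [Finset.sum_add_distrib]
  rw [m3 a b x hsk, m4 a b x hsk, m5 a b x hsk, m6 a b x hsk, m7 a b x,
    m8 a b x, m9 a b x hsk, m10 a b x hsk, m11 a b x hsk, m12 a b x hsk]
  abel

end WittAux

/-- Drinfeld: For `r ∈ Im(1-τ)`, the map `Δ_r(x) = x · r` endows the
Lie algebra `L` with a Lie bialgebra structure if and only if `x · c(r) = 0` for all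
`x ∈ L` (the modified Yang–Baxter equation). -/
theorem witt_bialg_stmt5 {F L : Type*} [Field F] [CharZero F]
    [LieRing L] [LieAlgebra F L] {ι : Type*} [Fintype ι] (a b : ι → L)
    (r : L ⊗[F] L) (hrsum : r = ∑ i, a i ⊗ₜ[F] b i)
    (hr : r ∈ LinearMap.range
      (LinearMap.id - (TensorProduct.comm F L L).toLinearMap)) :
    ((∀ x : L, coboundaryDelta F r x ∈ LinearMap.range
        (LinearMap.id - (TensorProduct.comm F L L).toLinearMap)) ∧
     (∀ x : L,
       ((LinearMap.id : L ⊗[F] (L ⊗[F] L) →ₗ[F] L ⊗[F] (L ⊗[F] L)) + cyclicPerm F L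
         + cyclicPerm F L ∘ₗ cyclicPerm F L)
         (LinearMap.lTensor L (coboundaryDelta F r) (coboundaryDelta F r x)) = 0) ∧
     (∀ x y : L, coboundaryDelta F r ⁅x, y⁆
       = ⁅x, coboundaryDelta F r y⁆ - ⁅y, coboundaryDelta F r x⁆))
    ↔ (∀ x : L, ⁅x, cYB (F := F) a b⁆ = 0) := by
  classical
  obtain ⟨s, hs⟩ := hr
  have hcc : ∀ m : L ⊗[F] L,
      (TensorProduct.comm F L L) ((TensorProduct.comm F L L) m) = m := fun m => by
    induction m using TensorProduct.induction_on with
    | zero => simp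
    | tmul u v => simp
    | add p q hp hq => simp [hp, hq]
  have hs' : s - (TensorProduct.comm F L L) s = r := by
    simpa [LinearMap.sub_apply] using hs
  have hτr : (TensorProduct.comm F L L) r = -r := by
    rw [← hs']
    simp only [map_sub, hcc]
    abel
  have hsk : (∑ i, b i ⊗ₜ[F] a i : L ⊗[F] L) = - ∑ i, a i ⊗ₜ[F] b i := by
    calc (∑ i, b i ⊗ₜ[F] a i : L ⊗[F] L)
        = (TensorProduct.comm F L L) (∑ i, a i ⊗ₜ[F] b i) := by simp [map_sum]
      _ = (TensorProduct.comm F L L) r := by rw [← hrsum]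
      _ = -r := hτr
      _ = - ∑ i, a i ⊗ₜ[F] b i := by rw [hrsum]
  have hequiv : ∀ (x : L) (m : L ⊗[F] L),
      (TensorProduct.comm F L L) ⁅x, m⁆ = ⁅x, (TensorProduct.comm F L L) m⁆ := by
    intro x m
    induction m using TensorProduct.induction_on with
    | zero => simp
    | tmul u v => simp [TensorProduct.LieModule.lie_tmul_right]; abel
    | add p q hp hq => simp only [lie_add, map_add, hp, hq]
  constructor
  · rintro ⟨h1, h2, h3⟩ x
    rw [← WittAux.key a b r hrsum hsk x]
    exact h2 x
  · intro h
    refine ⟨?_, ?_, ?_⟩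
    · intro x
      refine ⟨(2⁻¹ : F) • coboundaryDelta F r x, ?_⟩
      have hw : (TensorProduct.comm F L L) (coboundaryDelta F r x)
          = -(coboundaryDelta F r x) := by
        have h0 : coboundaryDelta F r x = ⁅x, r⁆ := rfl
        rw [h0, hequiv, hτr, lie_neg]
      simp only [LinearMap.sub_apply, LinearMap.id_coe, id_eq, LinearEquiv.coe_coe,
        LinearMap.smul_apply, map_smul, hw, smul_neg, sub_neg_eq_add]
      rw [← two_smul F, smul_smul]
      norm_num
    · intro x
      rw [WittAux.key a b r hrsum hsk x]
      exact h x
    · intro x y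
      have h0 : ∀ z : L, coboundaryDelta F r z = ⁅z, r⁆ := fun z => rfl
      rw [h0, h0, h0, lie_lie]
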